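/- Let q be even, let K be a k-arc in PG(2,q), and let B be a blocking set of the secants of K of minimum size k − 1. Let P1, P2, P3 be three distinct points of K, and for each i ∈ {1,2,3} let Q_i be a point of B lying on the secant through P_j and P_k, where {i,j,k} = {1,2,3}. Then Q1, Q2 and Q3 are collinear. -/

import Mathlib

open Projectivization

abbrev PGPoint (K : Type*) [Field K] := Projectivization K (Fin 3 → K)

lemma vec3_ne_zero_left {K : Type*} [Field K] {a b c : K} (h : a ≠ 0) :
    ![a, b, c] ≠ 0 := fun hv => h (by simpa using congrFun hv 0)

lemma vec3_ne_zero_right {K : Type*} [Field K] {a b c : K} (h : c ≠ 0) :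
    ![a, b, c] ≠ 0 := fun hv => h (by simpa using congrFun hv 2)

/-- The affine point `(a, b, 1)` of `PG(2,q)`. -/
def affPt {K : Type*} [Field K] (a b : K) : PGPoint K :=
  Projectivization.mk K ![a, b, 1] (vec3_ne_zero_right one_ne_zero)

/-- Three points of `PG(2,q)` are collinear if they lie in a common subspace
of projective dimension at most one. -/
def Coll3 {K : Type*} [Field K] (p q r : PGPoint K) : Prop :=
  ∃ W : Submodule K (Fin 3 → K), Module.finrank K W ≤ 2 ∧
    p.submodule ≤ W ∧ q.submodule ≤ W ∧ r.submodule ≤ W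

/-- An arc: a set of points no three of which are collinear. -/
def IsArc {K : Type*} [Field K] (S : Set (PGPoint K)) : Prop :=
  ∀ p ∈ S, ∀ q ∈ S, ∀ r ∈ S, p ≠ q → p ≠ r → q ≠ r → ¬ Coll3 p q r

/-- `B` is a blocking set of the secants of `S`. -/
def BlocksSecants {K : Type*} [Field K] (S B : Set (PGPoint K)) : Prop :=
  (∀ b ∈ B, b ∉ S) ∧ ∀ p ∈ S, ∀ q ∈ S, p ≠ q → ∃ b ∈ B, Coll3 p q b

/-- Lines of `PG(2,q)` as point sets. -/
def IsLine {K : Type*} [Field K] (L : Set (PGPoint K)) : Prop :=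
  ∃ W : Submodule K (Fin 3 → K), Module.finrank K W = 2 ∧
    L = {x : PGPoint K | x.submodule ≤ W}

/-- The line `ℓ∞ : X₃ = 0`. -/
def lInf (K : Type*) [Field K] : Set (PGPoint K) := {x : PGPoint K | x.rep 2 = 0}

/-- The point set `K_G = {(a, b, 1) : (a,b) ∈ G}`. -/
def KG {K : Type*} [Field K] (G : Set (K × K)) : Set (PGPoint K) :=
  (fun A : K × K => affPt A.1 A.2) '' G

/-- The linear map underlying the elation `φ_A`, `A = (a₁, a₂)`. -/
def elationLin (K : Type*) [Field K] (a1 a2 : K) : (Fin 3 → K) →ₗ[K] (Fin 3 → K) where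
  toFun v := ![v 0 + a1 * v 2, v 1 + a2 * v 2, v 2]
  map_add' u v := by funext i; fin_cases i <;> simp <;> ring
  map_smul' c v := by funext i; fin_cases i <;> simp <;> ring

lemma elationLin_injective {K : Type*} [Field K] (a1 a2 : K) :
    Function.Injective (elationLin K a1 a2) := by
  intro u v h
  have h0 := congrFun h 0
  have h1 := congrFun h 1
  have h2 := congrFun h 2
  simp [elationLin] at h0 h1 h2
  rw [h2] at h0 h1
  have e0 : u 0 = v 0 := add_right_cancel h0
  have e1 : u 1 = v 1 := add_right_cancel h1
  funext i
  fin_cases i <;> assumption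

/-- The elation `φ_A : (X₁,X₂,X₃) ↦ (X₁+a₁X₃, X₂+a₂X₃, X₃)` as a map on `PG(2,q)`. -/
def elation {K : Type*} [Field K] (a1 a2 : K) : PGPoint K → PGPoint K :=
  Projectivization.map (elationLin K a1 a2) (elationLin_injective a1 a2)

/-- The linear map underlying the homology
`(X₁,X₂,X₃) ↦ (λX₁+a₁X₃, λX₂+a₂X₃, X₃)`. -/
def homologyLin (K : Type*) [Field K] (l a1 a2 : K) : (Fin 3 → K) →ₗ[K] (Fin 3 → K) where
  toFun v := ![l * v 0 + a1 * v 2, l * v 1 + a2 * v 2, v 2]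
  map_add' u v := by funext i; fin_cases i <;> simp <;> ring
  map_smul' c v := by funext i; fin_cases i <;> simp <;> ring

lemma homologyLin_injective {K : Type*} [Field K] {l : K} (hl : l ≠ 0) (a1 a2 : K) :
    Function.Injective (homologyLin K l a1 a2) := by
  intro u v h
  have h0 := congrFun h 0
  have h1 := congrFun h 1
  have h2 := congrFun h 2
  simp [homologyLin] at h0 h1 h2
  rw [h2] at h0 h1
  have e0 : u 0 = v 0 := mul_left_cancel₀ hl (add_right_cancel h0)
  have e1 : u 1 = v 1 := mul_left_cancel₀ hl (add_right_cancel h1)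
  funext i
  fin_cases i <;> assumption

/-- The homology with axis `ℓ∞` as a map on `PG(2,q)`. -/
def homology {K : Type*} [Field K] {l : K} (hl : l ≠ 0) (a1 a2 : K) :
    PGPoint K → PGPoint K :=
  Projectivization.map (homologyLin K l a1 a2) (homologyLin_injective hl a1 a2)

lemma one_add_ne_zero {K : Type*} [Field K] [CharP K 2] {l : K} (h : l ≠ 1) :
    1 + l ≠ 0 := by
  intro h0
  apply h
  have : l = -1 := by linear_combination h0
  rw [this, CharTwo.neg_eq]

lemma add_one_ne_zero' {K : Type*} [Field K] [CharP K 2] {l : K} (h : l ≠ 1) :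
    l + 1 ≠ 0 := by rw [add_comm]; exact one_add_ne_zero h

lemma vec3_ne_zero_mid {K : Type*} [Field K] {a b c : K} (h : b ≠ 0) :
    ![a, b, c] ≠ 0 := fun hv => h (by simpa using congrFun hv 1)

lemma vec3_ne_zero_pair {K : Type*} [Field K] {A : K × K} (h : A ≠ (0, 0)) :
    ![A.1, A.2, 0] ≠ 0 := by
  intro hv
  apply h
  have h0 := congrFun hv 0
  have h1 := congrFun hv 1
  simp at h0 h1
  exact Prod.ext h0 h1

namespace SB
open Module Submodule

variable {K : Type*} [Field K]

lemma submodule_le_iff (x : PGPoint K) (W : Submodule K (Fin 3 → K)) :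
    x.submodule ≤ W ↔ x.rep ∈ W := by
  rw [Projectivization.submodule_eq, Submodule.span_singleton_le_iff_mem]

lemma finrank_span_pair_le (a b : Fin 3 → K) :
    finrank K (span K ({a, b} : Set (Fin 3 → K))) ≤ 2 := by
  classical
  refine (finrank_span_le_card _).trans ?_
  refine le_trans (Finset.card_le_card ?_)
    ((Finset.card_insert_le a {b}).trans (by simp))
  intro x hx
  simp only [Set.mem_toFinset] at hx
  simpa using hx

lemma rep_li_of_ne {x y : PGPoint K} (h : x ≠ y) :
    LinearIndependent K ![x.rep, y.rep] := by
  rw [LinearIndependent.pair_iff' x.rep_nonzero]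
  intro a ha
  apply h
  have : Projectivization.mk K x.rep x.rep_nonzero =
      Projectivization.mk K y.rep y.rep_nonzero := by
    rw [Projectivization.mk_eq_mk_iff']
    exact ⟨a⁻¹, by
      rcases eq_or_ne a 0 with rfl | ha0
      · exfalso; exact y.rep_nonzero (by rw [← ha, zero_smul])
      · rw [← ha, smul_smul, inv_mul_cancel₀ ha0, one_smul]⟩
  simpa [Projectivization.mk_rep] using this

lemma finrank_span_pair {x y : PGPoint K} (h : x ≠ y) :
    finrank K (span K ({x.rep, y.rep} : Set (Fin 3 → K))) = 2 := by
  have hli := rep_li_of_ne h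
  have h2 := finrank_span_eq_card hli
  rw [Matrix.range_cons_cons_empty] at h2
  simpa using h2

lemma coll3_iff_mem {x y : PGPoint K} (h : x ≠ y) (z : PGPoint K) :
    Coll3 x y z ↔ z.rep ∈ span K ({x.rep, y.rep} : Set (Fin 3 → K)) := by
  constructor
  · rintro ⟨W, hW, hx, hy, hz⟩
    have hle : span K ({x.rep, y.rep} : Set (Fin 3 → K)) ≤ W := by
      rw [span_le]
      intro v hv
      simp only [Set.mem_insert_iff, Set.mem_singleton_iff] at hv
      rcases hv with rfl | rfl
      · exact (submodule_le_iff x W).1 hx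
      · exact (submodule_le_iff y W).1 hy
    have hEq : span K ({x.rep, y.rep} : Set (Fin 3 → K)) = W :=
      Submodule.eq_of_le_of_finrank_le hle (by rw [finrank_span_pair h]; exact hW)
    rw [hEq]
    exact (submodule_le_iff z W).1 hz
  · intro hz
    refine ⟨span K ({x.rep, y.rep} : Set (Fin 3 → K)), finrank_span_pair_le _ _, ?_, ?_, ?_⟩ <;>
      rw [submodule_le_iff]
    · exact subset_span (by simp)
    · exact subset_span (by simp)
    · exact hz


lemma coll3_swap {x y z : PGPoint K} (h : Coll3 x y z) : Coll3 x z y := by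
  obtain ⟨W, h1, h2, h3, h4⟩ := h; exact ⟨W, h1, h2, h4, h3⟩

lemma coll3_flip {x y z : PGPoint K} (h : Coll3 x y z) : Coll3 y x z := by
  obtain ⟨W, h1, h2, h3, h4⟩ := h; exact ⟨W, h1, h3, h2, h4⟩

lemma coll3_rotate {x y z : PGPoint K} (h : Coll3 x y z) : Coll3 y z x := by
  obtain ⟨W, h1, h2, h3, h4⟩ := h; exact ⟨W, h1, h3, h4, h2⟩

lemma not_coll3_iff_li (p q r : PGPoint K) :
    ¬ Coll3 p q r ↔ LinearIndependent K ![p.rep, q.rep, r.rep] := by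
  constructor
  · intro hn
    by_contra hli
    apply hn
    rcases eq_or_ne p q with rfl | hpq
    · exact ⟨span K ({p.rep, r.rep} : Set (Fin 3 → K)), finrank_span_pair_le _ _,
        (submodule_le_iff _ _).2 (subset_span (by simp)),
        (submodule_le_iff _ _).2 (subset_span (by simp)),
        (submodule_le_iff _ _).2 (subset_span (by simp))⟩
    · rw [coll3_iff_mem hpq]
      obtain ⟨g, hg, i, hi⟩ := Fintype.not_linearIndependent_iff.1 hli
      rw [Fin.sum_univ_three] at hg
      simp only [Matrix.cons_val_zero, Matrix.cons_val_one, Matrix.head_cons,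
        Matrix.cons_val_two, Matrix.tail_cons] at hg
      rcases eq_or_ne (g 2) 0 with h2 | h2
      · exfalso
        rw [h2, zero_smul, add_zero] at hg
        obtain ⟨e0, e1⟩ := (rep_li_of_ne hpq).eq_zero_of_pair hg
        fin_cases i <;> simp_all
      · have key : g 2 • r.rep = -(g 0 • p.rep + g 1 • q.rep) := by
          exact eq_neg_of_add_eq_zero_right hg
        have key2 : r.rep = (g 2)⁻¹ • (-(g 0 • p.rep + g 1 • q.rep)) := by
          rw [← key, smul_smul, inv_mul_cancel₀ h2, one_smul]
        rw [key2]
        exact smul_mem _ _ (neg_mem (add_mem (smul_mem _ _ (subset_span (by simp)))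
          (smul_mem _ _ (subset_span (by simp)))))
  · intro hli ⟨W, hW, h1, h2, h3⟩
    have hle : span K (Set.range ![p.rep, q.rep, r.rep]) ≤ W := by
      rw [span_le]
      rintro v ⟨i, rfl⟩
      fin_cases i
      · exact (submodule_le_iff p W).1 h1
      · exact (submodule_le_iff q W).1 h2
      · exact (submodule_le_iff r W).1 h3
    have h3' : finrank K (span K (Set.range ![p.rep, q.rep, r.rep])) = 3 := by
      rw [finrank_span_eq_card hli]; simp
    have := Submodule.finrank_mono hle
    omega


lemma coll3_iff_det (e : Basis (Fin 3) K (Fin 3 → K)) (p q r : PGPoint K) :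
    Coll3 p q r ↔
      Matrix.det (Matrix.of ![e.equivFun p.rep, e.equivFun q.rep, e.equivFun r.rep]) = 0 := by
  rw [← not_iff_not, not_coll3_iff_li]
  have hcomp : (⇑e.equivFun.toLinearMap) ∘ ![p.rep, q.rep, r.rep]
      = fun i => (Matrix.of ![e.equivFun p.rep, e.equivFun q.rep, e.equivFun r.rep]) i := by
    funext i; fin_cases i <;> rfl
  have key : LinearIndependent K ![p.rep, q.rep, r.rep] ↔
      IsUnit (Matrix.of ![e.equivFun p.rep, e.equivFun q.rep, e.equivFun r.rep]) := by
    rw [← Matrix.linearIndependent_rows_iff_isUnit,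
      show ∀ A : Matrix (Fin 3) (Fin 3) K, A.row = fun i => A i from fun _ => rfl, ← hcomp,
      LinearMap.linearIndependent_iff (e.equivFun.toLinearMap) e.equivFun.ker]
  rw [key, Matrix.isUnit_iff_isUnit_det, isUnit_iff_ne_zero]


lemma partner_unique {S B : Set (PGPoint K)} (harc : IsArc S) (hBS : ∀ b ∈ B, b ∉ S)
    {p q q' b : PGPoint K} (hp : p ∈ S) (hq : q ∈ S) (hq' : q' ∈ S) (hb : b ∈ B)
    (hpq : p ≠ q) (hpq' : p ≠ q') (h1 : Coll3 p q b) (h2 : Coll3 p q' b) : q = q' := by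
  by_contra hne
  have hpb : p ≠ b := fun h => hBS b hb (h ▸ hp)
  have hqm : q.rep ∈ span K ({p.rep, b.rep} : Set (Fin 3 → K)) :=
    (coll3_iff_mem hpb q).1 (coll3_swap h1)
  have hqm' : q'.rep ∈ span K ({p.rep, b.rep} : Set (Fin 3 → K)) :=
    (coll3_iff_mem hpb q').1 (coll3_swap h2)
  exact harc p hp q hq q' hq' hpq hpq' hne
    ⟨span K {p.rep, b.rep}, finrank_span_pair_le _ _,
      (submodule_le_iff _ _).2 (subset_span (by simp)),
      (submodule_le_iff _ _).2 hqm, (submodule_le_iff _ _).2 hqm'⟩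

lemma blocking_structure [Fintype K]
    {S B : Set (PGPoint K)} (harc : IsArc S) (hB : BlocksSecants S B)
    (hmin : B.ncard = S.ncard - 1) :
    (∀ p ∈ S, ∀ q ∈ S, p ≠ q → ∀ b ∈ B, ∀ b' ∈ B, Coll3 p q b → Coll3 p q b' → b = b') ∧
    (∀ b ∈ B, ∀ p ∈ S, ∃ q ∈ S, q ≠ p ∧ Coll3 p q b) := by
  classical
  have hfinP : Finite (PGPoint K) := Quotient.finite _
  obtain ⟨hBS, hbl⟩ := hB
  have hSfin : S.Finite := Set.toFinite S
  have hBfin : B.Finite := Set.toFinite B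
  set Sf : Finset (PGPoint K) := hSfin.toFinset with hSfdef
  set Bf : Finset (PGPoint K) := hBfin.toFinset with hBfdef
  have hSmem : ∀ x, x ∈ Sf ↔ x ∈ S := fun x => hSfin.mem_toFinset
  have hBmem : ∀ x, x ∈ Bf ↔ x ∈ B := fun x => hBfin.mem_toFinset
  set k := Sf.card with hk
  have hkS : S.ncard = k := Set.ncard_eq_toFinset_card S hSfin
  have hBn : B.ncard = Bf.card := Set.ncard_eq_toFinset_card B hBfin
  have hBcard : Bf.card = k - 1 := by omega
  set T := Sf.offDiag with hT
  have hTmem : ∀ t : PGPoint K × PGPoint K, t ∈ T ↔ t.1 ∈ S ∧ t.2 ∈ S ∧ t.1 ≠ t.2 := by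
    intro t
    rw [hT, Finset.mem_offDiag, hSmem, hSmem]
  set I := (T ×ˢ Bf).filter (fun x => Coll3 x.1.1 x.1.2 x.2) with hI
  have hImem : ∀ x : (PGPoint K × PGPoint K) × PGPoint K,
      x ∈ I ↔ x.1 ∈ T ∧ x.2 ∈ B ∧ Coll3 x.1.1 x.1.2 x.2 := by
    intro x
    rw [hI, Finset.mem_filter, Finset.mem_product, hBmem]
    tauto
  -- lower bound
  have hIcard1 : I.card = ∑ t ∈ T, (I.filter (fun x => x.1 = t)).card :=
    Finset.card_eq_sum_card_fiberwise (fun x hx => ((hImem x).1 hx).1)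
  have hfib1 : ∀ t ∈ T, 1 ≤ (I.filter (fun x => x.1 = t)).card := by
    intro t ht
    obtain ⟨h1, h2, h3⟩ := (hTmem t).1 ht
    obtain ⟨b, hb, hcol⟩ := hbl t.1 h1 t.2 h2 h3
    exact Finset.card_pos.2 ⟨(t, b), Finset.mem_filter.2 ⟨(hImem _).2 ⟨ht, hb, hcol⟩, rfl⟩⟩
  have hlow : T.card ≤ I.card := by
    rw [hIcard1]
    calc T.card = ∑ _t ∈ T, 1 := by simp
    _ ≤ _ := Finset.sum_le_sum hfib1
  -- upper bound
  have hIcard2 : I.card = ∑ b ∈ Bf, (I.filter (fun x => x.2 = b)).card :=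
    Finset.card_eq_sum_card_fiberwise (fun x hx => (hBmem _).2 ((hImem x).1 hx).2.1)
  have hinj : ∀ b ∈ Bf, Set.InjOn (fun x : (PGPoint K × PGPoint K) × PGPoint K => x.1.1)
      ↑(I.filter (fun x => x.2 = b)) := by
    intro b hb x hx y hy hxy
    simp only [Finset.coe_filter, Set.mem_setOf_eq] at hx hy
    obtain ⟨hxI, hxb⟩ := hx
    obtain ⟨hyI, hyb⟩ := hy
    obtain ⟨hxT, hxB, hxc⟩ := (hImem x).1 hxI
    obtain ⟨hyT, hyB, hyc⟩ := (hImem y).1 hyI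
    obtain ⟨hx1, hx2, hx3⟩ := (hTmem _).1 hxT
    obtain ⟨hy1, hy2, hy3⟩ := (hTmem _).1 hyT
    simp only at hxy
    have h2 : x.1.2 = y.1.2 := by
      apply partner_unique harc hBS hx1 hx2 hy2 hxB hx3 (hxy ▸ hy3) hxc
      rw [hxb, ← hyb] at hxc ⊢
      rw [hxy]
      exact hyc
    have : x.1 = y.1 := Prod.ext hxy h2
    exact Prod.ext this (by rw [hxb, hyb])
  have hfib2 : ∀ b ∈ Bf, (I.filter (fun x => x.2 = b)).card ≤ k := by
    intro b hb
    apply Finset.card_le_card_of_injOn (fun x => x.1.1) _ (hinj b hb)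
    intro x hx
    obtain ⟨hxI, _⟩ := Finset.mem_filter.1 hx
    exact (hSmem _).2 ((hTmem _).1 ((hImem x).1 hxI).1).1
  have hup : I.card ≤ (k - 1) * k := by
    rw [hIcard2]
    calc ∑ b ∈ Bf, (I.filter (fun x => x.2 = b)).card ≤ ∑ _b ∈ Bf, k :=
      Finset.sum_le_sum hfib2
    _ = (k - 1) * k := by rw [Finset.sum_const, hBcard, smul_eq_mul]
  have hTcard : T.card = k * k - k := by rw [hT, Finset.offDiag_card]
  have hmul : (k - 1) * k = k * k - k := by rw [Nat.sub_mul, one_mul]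
  have hIT : I.card = T.card := le_antisymm (by omega) hlow
  constructor
  · -- uniqueness
    intro p hp q hq hpq b hb b' hb' hc hc'
    have ht : (p, q) ∈ T := (hTmem _).2 ⟨hp, hq, hpq⟩
    have hone : (I.filter (fun x => x.1 = (p, q))).card = 1 := by
      have hsum : ∑ t ∈ T, (I.filter (fun x => x.1 = t)).card = ∑ _t ∈ T, 1 := by
        rw [← hIcard1, hIT]; simp
      exact ((Finset.sum_eq_sum_iff_of_le hfib1).1 hsum.symm (p, q) ht).symm
    have hm1 : ((p, q), b) ∈ I.filter (fun x => x.1 = (p, q)) :=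
      Finset.mem_filter.2 ⟨(hImem _).2 ⟨ht, hb, hc⟩, rfl⟩
    have hm2 : ((p, q), b') ∈ I.filter (fun x => x.1 = (p, q)) :=
      Finset.mem_filter.2 ⟨(hImem _).2 ⟨ht, hb', hc'⟩, rfl⟩
    obtain ⟨z, hz⟩ := Finset.card_eq_one.1 hone
    have e1 := hz ▸ hm1
    have e2 := hz ▸ hm2
    rw [Finset.mem_singleton] at e1 e2
    have := e1.trans e2.symm
    exact congrArg Prod.snd this
  · -- coverage
    intro b hb p hp
    have hbf : b ∈ Bf := (hBmem _).2 hb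
    have hfibeq : (I.filter (fun x => x.2 = b)).card = k := by
      have hsum : ∑ b' ∈ Bf, (I.filter (fun x => x.2 = b')).card = ∑ _b' ∈ Bf, k := by
        rw [← hIcard2, hIT, hTcard, Finset.sum_const, hBcard, smul_eq_mul, hmul]
      exact (Finset.sum_eq_sum_iff_of_le hfib2).1 hsum b hbf
    have himg : (I.filter (fun x => x.2 = b)).image (fun x => x.1.1) = Sf := by
      apply Finset.eq_of_subset_of_card_le
      · intro y hy
        obtain ⟨x, hx, rfl⟩ := Finset.mem_image.1 hy
        obtain ⟨hxI, _⟩ := Finset.mem_filter.1 hx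
        exact (hSmem _).2 ((hTmem _).1 ((hImem x).1 hxI).1).1
      · rw [Finset.card_image_of_injOn (hinj b hbf), hfibeq]
    have hpmem : p ∈ (I.filter (fun x => x.2 = b)).image (fun x => x.1.1) := by
      rw [himg]; exact (hSmem _).2 hp
    obtain ⟨x, hx, hxp⟩ := Finset.mem_image.1 hpmem
    obtain ⟨hxI, hxb⟩ := Finset.mem_filter.1 hx
    obtain ⟨hxT, hxB, hxc⟩ := (hImem x).1 hxI
    obtain ⟨h1, h2, h3⟩ := (hTmem _).1 hxT
    refine ⟨x.1.2, h2, ?_, ?_⟩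
    · rw [← hxp]; exact fun h => h3 (h.symm)
    · rw [← hxp, ← hxb]; exact hxc


lemma coll3_iff_det' (e : Basis (Fin 3) K (Fin 3 → K)) (p q r : PGPoint K) :
    Coll3 p q r ↔
      e.equivFun p.rep 0 * e.equivFun q.rep 1 * e.equivFun r.rep 2
      - e.equivFun p.rep 0 * e.equivFun q.rep 2 * e.equivFun r.rep 1
      - e.equivFun p.rep 1 * e.equivFun q.rep 0 * e.equivFun r.rep 2
      + e.equivFun p.rep 1 * e.equivFun q.rep 2 * e.equivFun r.rep 0
      + e.equivFun p.rep 2 * e.equivFun q.rep 0 * e.equivFun r.rep 1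
      - e.equivFun p.rep 2 * e.equivFun q.rep 1 * e.equivFun r.rep 0 = 0 := by
  rw [coll3_iff_det e, Matrix.det_fin_three]
  simp only [Matrix.of_apply, Matrix.cons_val', Matrix.cons_val_zero, Matrix.cons_val_one,
    Matrix.head_cons, Matrix.empty_val', Matrix.cons_val_fin_one, Matrix.head_fin_const,
    Matrix.cons_val_two, Matrix.tail_cons]

end SB

set_option maxHeartbeats 2000000 in
open SB in
theorem blocking_points_of_triangle_are_collinear
    {r : ℕ} (hr : 1 ≤ r) {K : Type*} [Field K] [Fintype K]
    (hq : Fintype.card K = 2 ^ r)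
    (S B : Set (PGPoint K)) (harc : IsArc S)
    (hB : BlocksSecants S B) (hmin : B.ncard = S.ncard - 1)
    (P1 P2 P3 : PGPoint K) (hP1 : P1 ∈ S) (hP2 : P2 ∈ S) (hP3 : P3 ∈ S)
    (h12 : P1 ≠ P2) (h13 : P1 ≠ P3) (h23 : P2 ≠ P3)
    (Q1 Q2 Q3 : PGPoint K) (hQ1 : Q1 ∈ B) (hQ2 : Q2 ∈ B) (hQ3 : Q3 ∈ B)
    (hQ1c : Coll3 P2 P3 Q1) (hQ2c : Coll3 P1 P3 Q2) (hQ3c : Coll3 P1 P2 Q3) :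
    Coll3 Q1 Q2 Q3 := by
  classical
  -- characteristic 2
  haveI hchar : CharP K 2 := by
    obtain ⟨p, hp⟩ := CharP.exists K
    haveI := hp
    obtain ⟨n, hprime, hcard⟩ := FiniteField.card K p
    have hp2 : p = 2 := by
      have hdvd : p ∣ 2 ^ r := by
        rw [← hq, hcard]
        exact dvd_pow_self p n.pos.ne'
      exact (Nat.prime_dvd_prime_iff_eq hprime Nat.prime_two).1
        (hprime.dvd_of_dvd_pow hdvd)
    rwa [hp2] at hp
  have hBS := hB.1
  obtain ⟨huniq, hcover⟩ := SB.blocking_structure harc hB hmin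
  -- coordinates
  have hnc : ¬ Coll3 P1 P2 P3 := harc P1 hP1 P2 hP2 P3 hP3 h12 h13 h23
  have hli : LinearIndependent K ![P1.rep, P2.rep, P3.rep] :=
    (SB.not_coll3_iff_li _ _ _).1 hnc
  have hcard3 : Fintype.card (Fin 3) = Module.finrank K (Fin 3 → K) := by
    simp [Module.finrank_fin_fun]
  let e : Module.Basis (Fin 3) K (Fin 3 → K) := basisOfLinearIndependentOfCardEqFinrank hli hcard3
  have he : ⇑e = ![P1.rep, P2.rep, P3.rep] :=
    coe_basisOfLinearIndependentOfCardEqFinrank hli hcard3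
  set c : PGPoint K → Fin 3 → K := fun x => e.equivFun x.rep with hcdef
  have hdet : ∀ x y z : PGPoint K, Coll3 x y z ↔
      c x 0 * c y 1 * c z 2 - c x 0 * c y 2 * c z 1 - c x 1 * c y 0 * c z 2
      + c x 1 * c y 2 * c z 0 + c x 2 * c y 0 * c z 1 - c x 2 * c y 1 * c z 0 = 0 :=
    fun x y z => SB.coll3_iff_det' e x y z
  have hstd : ∀ i j : Fin 3, c (![P1, P2, P3] i) j = if i = j then 1 else 0 := by
    intro i j
    have hrep : (![P1, P2, P3] i).rep = e i := by rw [he]; fin_cases i <;> rfl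
    rw [hcdef]
    simp only [hrep, Module.Basis.equivFun_self]
  have hcne : ∀ x : PGPoint K, c x ≠ 0 := by
    intro x hx
    exact x.rep_nonzero (by rwa [hcdef, LinearEquiv.map_eq_zero_iff] at hx)
  -- identification of points with zero coordinates
  have hident : ∀ (x : PGPoint K) (i : Fin 3), (∀ j, j ≠ i → c x j = 0) →
      x = ![P1, P2, P3] i := by
    intro x i hj
    have hxi : c x i ≠ 0 := by
      intro h0
      apply hcne x
      funext j
      by_cases hji : j = i
      · rw [hji]; exact h0
      · exact hj j hji
    have hfun : c x = (c x i) • c (![P1, P2, P3] i) := by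
      funext j
      by_cases hji : j = i
      · subst hji
        rw [Pi.smul_apply, smul_eq_mul, hstd, if_pos rfl, mul_one]
      · rw [Pi.smul_apply, smul_eq_mul, hj j hji, hstd, if_neg (fun h => hji h.symm), mul_zero]
    have hrep : x.rep = (c x i) • (![P1, P2, P3] i).rep := by
      apply e.equivFun.injective
      rw [map_smul]
      exact hfun
    rw [← Projectivization.mk_rep x, ← Projectivization.mk_rep (![P1, P2, P3] i)]
    rw [Projectivization.mk_eq_mk_iff']
    exact ⟨c x i, hrep.symm⟩
  -- literal coordinates of the triangle
  have cP1 : ∀ j, c P1 j = if (0 : Fin 3) = j then 1 else 0 := fun j => hstd 0 j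
  have cP2 : ∀ j, c P2 j = if (1 : Fin 3) = j then 1 else 0 := fun j => hstd 1 j
  have cP3 : ∀ j, c P3 j = if (2 : Fin 3) = j then 1 else 0 := fun j => hstd 2 j
  have hQne : ∀ q ∈ B, ∀ i : Fin 3, q ≠ ![P1, P2, P3] i := by
    intro q hq i h
    exact hBS q hq (by rw [h]; fin_cases i <;> assumption)
  -- coordinates of the blocking points
  have hu0 : c Q1 0 = 0 := by
    have h := (hdet P2 P3 Q1).1 hQ1c
    simp [cP2, cP3] at h
    linear_combination h
  have hw1 : c Q2 1 = 0 := by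
    have h := (hdet P1 P3 Q2).1 hQ2c
    simp [cP1, cP3] at h
    linear_combination h
  have hz2 : c Q3 2 = 0 := by
    have h := (hdet P1 P2 Q3).1 hQ3c
    simp [cP1, cP2] at h
    linear_combination h
  have hu1 : c Q1 1 ≠ 0 := by
    intro h0
    refine hQne Q1 hQ1 2 (hident Q1 2 ?_)
    intro j hj
    fin_cases j
    · exact hu0
    · exact h0
    · exact absurd rfl hj
  have hu2 : c Q1 2 ≠ 0 := by
    intro h0
    refine hQne Q1 hQ1 1 (hident Q1 1 ?_)
    intro j hj
    fin_cases j
    · exact hu0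
    · exact absurd rfl hj
    · exact h0
  have hw0 : c Q2 0 ≠ 0 := by
    intro h0
    refine hQne Q2 hQ2 2 (hident Q2 2 ?_)
    intro j hj
    fin_cases j
    · exact h0
    · exact hw1
    · exact absurd rfl hj
  have hw2 : c Q2 2 ≠ 0 := by
    intro h0
    refine hQne Q2 hQ2 0 (hident Q2 0 ?_)
    intro j hj
    fin_cases j
    · exact absurd rfl hj
    · exact hw1
    · exact h0
  have hz0 : c Q3 0 ≠ 0 := by
    intro h0
    refine hQne Q3 hQ3 1 (hident Q3 1 ?_)
    intro j hj
    fin_cases j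
    · exact h0
    · exact absurd rfl hj
    · exact hz2
  have hz1 : c Q3 1 ≠ 0 := by
    intro h0
    refine hQne Q3 hQ3 0 (hident Q3 0 ?_)
    intro j hj
    fin_cases j
    · exact absurd rfl hj
    · exact h0
    · exact hz2
  -- the blocking points are pairwise distinct
  have hq12 : Q1 ≠ Q2 := fun h => hu1 (by rw [h]; exact hw1)
  have hq13 : Q1 ≠ Q3 := fun h => hu2 (by rw [h]; exact hz2)
  have hq23 : Q2 ≠ Q3 := fun h => hw2 (by rw [h]; exact hz2)
  -- coordinates of other arc points are all nonzero
  have hScoord : ∀ X, X ∈ S → X ≠ P1 → X ≠ P2 → X ≠ P3 →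
      (c X 0 ≠ 0 ∧ c X 1 ≠ 0 ∧ c X 2 ≠ 0) := by
    intro X hXS hX1 hX2 hX3
    refine ⟨?_, ?_, ?_⟩
    · intro h0
      apply harc P2 hP2 P3 hP3 X hXS h23 (fun h => hX2 h.symm) (fun h => hX3 h.symm)
      rw [hdet]
      simp [cP2, cP3]
      linear_combination h0
    · intro h0
      apply harc P1 hP1 P3 hP3 X hXS h13 (fun h => hX1 h.symm) (fun h => hX3 h.symm)
      rw [hdet]
      simp [cP1, cP3]
      linear_combination h0
    · intro h0
      apply harc P1 hP1 P2 hP2 X hXS h12 (fun h => hX1 h.symm) (fun h => hX2 h.symm)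
      rw [hdet]
      simp [cP1, cP2]
      linear_combination h0
  -- partners of the three vertices on lines through each blocking point
  choose pt1 hpt1S hpt1ne hpt1col using fun b (hb : b ∈ B) => hcover b hb P1 hP1
  choose pt2 hpt2S hpt2ne hpt2col using fun b (hb : b ∈ B) => hcover b hb P2 hP2
  choose pt3 hpt3S hpt3ne hpt3col using fun b (hb : b ∈ B) => hcover b hb P3 hP3
  have key1 : ∀ b (hb : b ∈ B), b ≠ Q2 → b ≠ Q3 →
      (pt1 b hb ≠ P2 ∧ pt1 b hb ≠ P3) ∧
      (c b 1 ≠ 0 ∧ c b 2 ≠ 0 ∧ c b 1 / c b 2 = c (pt1 b hb) 1 / c (pt1 b hb) 2) := by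
    intro b hb hbQ2 hbQ3
    have hX := hpt1S b hb
    have hXne1 := hpt1ne b hb
    have hcol := hpt1col b hb
    have hne2 : pt1 b hb ≠ P2 := by
      intro h
      exact hbQ3 (huniq P1 hP1 P2 hP2 h12 b hb Q3 hQ3 (h ▸ hcol) hQ3c)
    have hne3 : pt1 b hb ≠ P3 := by
      intro h
      exact hbQ2 (huniq P1 hP1 P3 hP3 h13 b hb Q2 hQ2 (h ▸ hcol) hQ2c)
    obtain ⟨hx0, hx1, hx2⟩ := hScoord _ hX hXne1 hne2 hne3
    have h := (hdet P1 (pt1 b hb) b).1 hcol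
    simp [cP1] at h
    have hrel : c (pt1 b hb) 1 * c b 2 = c (pt1 b hb) 2 * c b 1 := by
      linear_combination h
    have hb2 : c b 2 ≠ 0 := by
      intro h0
      have hb1 : c b 1 = 0 := by
        have := hrel
        rw [h0, mul_zero] at this
        exact (mul_eq_zero.1 this.symm).resolve_left hx2
      refine hQne b hb 0 (hident b 0 ?_)
      intro j hj
      fin_cases j
      · exact absurd rfl hj
      · exact hb1
      · exact h0
    have hb1 : c b 1 ≠ 0 := by
      intro h0
      rw [h0, mul_zero] at hrel
      exact hx1 ((mul_eq_zero.1 hrel).resolve_right hb2)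
    refine ⟨⟨hne2, hne3⟩, hb1, hb2, ?_⟩
    rw [div_eq_div_iff hb2 hx2]
    linear_combination -hrel
  have key2 : ∀ b (hb : b ∈ B), b ≠ Q3 → b ≠ Q1 →
      (pt2 b hb ≠ P1 ∧ pt2 b hb ≠ P3) ∧
      (c b 2 ≠ 0 ∧ c b 0 ≠ 0 ∧ c b 2 / c b 0 = c (pt2 b hb) 2 / c (pt2 b hb) 0) := by
    intro b hb hbQ3 hbQ1
    have hX := hpt2S b hb
    have hXne2 := hpt2ne b hb
    have hcol := hpt2col b hb
    have hne1 : pt2 b hb ≠ P1 := by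
      intro h
      refine hbQ3 (huniq P2 hP2 P1 hP1 h12.symm b hb Q3 hQ3 (h ▸ hcol)
        (SB.coll3_flip hQ3c))
    have hne3 : pt2 b hb ≠ P3 := by
      intro h
      exact hbQ1 (huniq P2 hP2 P3 hP3 h23 b hb Q1 hQ1 (h ▸ hcol) hQ1c)
    obtain ⟨hx0, hx1, hx2⟩ := hScoord _ hX hne1 hXne2 hne3
    have h := (hdet P2 (pt2 b hb) b).1 hcol
    simp [cP2] at h
    have hrel : c (pt2 b hb) 2 * c b 0 = c (pt2 b hb) 0 * c b 2 := by
      linear_combination h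
    have hb0 : c b 0 ≠ 0 := by
      intro h0
      have hb2' : c b 2 = 0 := by
        have := hrel
        rw [h0, mul_zero] at this
        exact (mul_eq_zero.1 this.symm).resolve_left hx0
      refine hQne b hb 1 (hident b 1 ?_)
      intro j hj
      fin_cases j
      · exact h0
      · exact absurd rfl hj
      · exact hb2'
    have hb2' : c b 2 ≠ 0 := by
      intro h0
      rw [h0, mul_zero] at hrel
      exact hx2 ((mul_eq_zero.1 hrel).resolve_right hb0)
    refine ⟨⟨hne1, hne3⟩, hb2', hb0, ?_⟩
    rw [div_eq_div_iff hb0 hx0]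
    linear_combination -hrel
  have key3 : ∀ b (hb : b ∈ B), b ≠ Q1 → b ≠ Q2 →
      (pt3 b hb ≠ P1 ∧ pt3 b hb ≠ P2) ∧
      (c b 0 ≠ 0 ∧ c b 1 ≠ 0 ∧ c b 0 / c b 1 = c (pt3 b hb) 0 / c (pt3 b hb) 1) := by
    intro b hb hbQ1 hbQ2
    have hX := hpt3S b hb
    have hXne3 := hpt3ne b hb
    have hcol := hpt3col b hb
    have hne1 : pt3 b hb ≠ P1 := by
      intro h
      exact hbQ2 (huniq P3 hP3 P1 hP1 h13.symm b hb Q2 hQ2 (h ▸ hcol)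
        (SB.coll3_flip hQ2c))
    have hne2 : pt3 b hb ≠ P2 := by
      intro h
      exact hbQ1 (huniq P3 hP3 P2 hP2 h23.symm b hb Q1 hQ1 (h ▸ hcol)
        (SB.coll3_flip hQ1c))
    obtain ⟨hx0, hx1, hx2⟩ := hScoord _ hX hne1 hne2 hXne3
    have h := (hdet P3 (pt3 b hb) b).1 hcol
    simp [cP3] at h
    have hrel : c (pt3 b hb) 0 * c b 1 = c (pt3 b hb) 1 * c b 0 := by
      linear_combination h
    have hb1 : c b 1 ≠ 0 := by
      intro h0
      have hb0' : c b 0 = 0 := by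
        have := hrel
        rw [h0, mul_zero] at this
        exact (mul_eq_zero.1 this.symm).resolve_left hx1
      refine hQne b hb 2 (hident b 2 ?_)
      intro j hj
      fin_cases j
      · exact hb0'
      · exact h0
      · exact absurd rfl hj
    have hb0' : c b 0 ≠ 0 := by
      intro h0
      rw [h0, mul_zero] at hrel
      exact hx0 ((mul_eq_zero.1 hrel).resolve_right hb1)
    refine ⟨⟨hne1, hne2⟩, hb0', hb1, ?_⟩
    rw [div_eq_div_iff hb1 hx1]
    linear_combination -hrel
  -- finite sets
  have hfinP : Finite (PGPoint K) := Quotient.finite _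
  have hSfin : S.Finite := Set.toFinite S
  have hBfin : B.Finite := Set.toFinite B
  set Sf := hSfin.toFinset with hSf
  set Bf := hBfin.toFinset with hBf
  set S' : Finset (PGPoint K) := Sf \ {P1, P2, P3} with hS'
  have hS'mem : ∀ X, X ∈ S' ↔ X ∈ S ∧ X ≠ P1 ∧ X ≠ P2 ∧ X ≠ P3 := by
    intro X
    rw [hS', Finset.mem_sdiff, hSf, Set.Finite.mem_toFinset]
    simp only [Finset.mem_insert, Finset.mem_singleton]
    tauto
  have hBsd : ∀ {q1 q2 : PGPoint K} {b : PGPoint K},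
      b ∈ Bf \ ({q1, q2} : Finset (PGPoint K)) ↔ b ∈ B ∧ b ≠ q1 ∧ b ≠ q2 := by
    intro q1 q2 b
    rw [Finset.mem_sdiff, hBf, Set.Finite.mem_toFinset]
    simp only [Finset.mem_insert, Finset.mem_singleton]
    tauto
  -- the three product identities
  have hprod1 : ∏ b ∈ Bf \ {Q2, Q3}, (c b 1 / c b 2) = ∏ X ∈ S', (c X 1 / c X 2) := by
    refine Finset.prod_bij (fun b hb => pt1 b (hBsd.1 hb).1) ?_ ?_ ?_ ?_
    · intro b hb
      obtain ⟨hbB, hb2, hb3⟩ := hBsd.1 hb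
      exact (hS'mem _).2 ⟨hpt1S b hbB, hpt1ne b hbB, (key1 b hbB hb2 hb3).1.1,
        (key1 b hbB hb2 hb3).1.2⟩
    · intro b hb b' hb' heq
      obtain ⟨hbB, _, _⟩ := hBsd.1 hb
      obtain ⟨hbB', _, _⟩ := hBsd.1 hb'
      refine huniq P1 hP1 (pt1 b hbB) (hpt1S b hbB) (fun h => hpt1ne b hbB h.symm)
        b hbB b' hbB' (hpt1col b hbB) ?_
      have heq2 : pt1 b hbB = pt1 b' hbB' := heq
      rw [heq2]
      exact hpt1col b' hbB'
    · intro X hX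
      obtain ⟨hXS, hX1, hX2, hX3⟩ := (hS'mem X).1 hX
      obtain ⟨b, hbB, hbcol⟩ := hB.2 P1 hP1 X hXS (fun h => hX1 h.symm)
      have hbQ2 : b ≠ Q2 := by
        intro h
        exact hX3 (SB.partner_unique harc hBS hP1 hXS hP3 hQ2
          (fun hh => hX1 hh.symm) h13 (h ▸ hbcol) hQ2c)
      have hbQ3 : b ≠ Q3 := by
        intro h
        exact hX2 (SB.partner_unique harc hBS hP1 hXS hP2 hQ3
          (fun hh => hX1 hh.symm) h12 (h ▸ hbcol) hQ3c)
      refine ⟨b, hBsd.2 ⟨hbB, hbQ2, hbQ3⟩, ?_⟩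
      exact SB.partner_unique harc hBS hP1 (hpt1S b hbB) hXS hbB
        (fun h => hpt1ne b hbB h.symm) (fun h => hX1 h.symm) (hpt1col b hbB) hbcol
    · intro b hb
      obtain ⟨hbB, hb2, hb3⟩ := hBsd.1 hb
      exact (key1 b hbB hb2 hb3).2.2.2
  have hprod2 : ∏ b ∈ Bf \ {Q3, Q1}, (c b 2 / c b 0) = ∏ X ∈ S', (c X 2 / c X 0) := by
    refine Finset.prod_bij (fun b hb => pt2 b (hBsd.1 hb).1) ?_ ?_ ?_ ?_
    · intro b hb
      obtain ⟨hbB, hb3, hb1⟩ := hBsd.1 hb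
      exact (hS'mem _).2 ⟨hpt2S b hbB, (key2 b hbB hb3 hb1).1.1, hpt2ne b hbB,
        (key2 b hbB hb3 hb1).1.2⟩
    · intro b hb b' hb' heq
      obtain ⟨hbB, _, _⟩ := hBsd.1 hb
      obtain ⟨hbB', _, _⟩ := hBsd.1 hb'
      refine huniq P2 hP2 (pt2 b hbB) (hpt2S b hbB) (fun h => hpt2ne b hbB h.symm)
        b hbB b' hbB' (hpt2col b hbB) ?_
      have heq2 : pt2 b hbB = pt2 b' hbB' := heq
      rw [heq2]
      exact hpt2col b' hbB'
    · intro X hX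
      obtain ⟨hXS, hX1, hX2, hX3⟩ := (hS'mem X).1 hX
      obtain ⟨b, hbB, hbcol⟩ := hB.2 P2 hP2 X hXS (fun h => hX2 h.symm)
      have hbQ3 : b ≠ Q3 := by
        intro h
        exact hX1 (SB.partner_unique harc hBS hP2 hXS hP1 hQ3
          (fun hh => hX2 hh.symm) h12.symm (h ▸ hbcol) (SB.coll3_flip hQ3c))
      have hbQ1 : b ≠ Q1 := by
        intro h
        exact hX3 (SB.partner_unique harc hBS hP2 hXS hP3 hQ1
          (fun hh => hX2 hh.symm) h23 (h ▸ hbcol) hQ1c)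
      refine ⟨b, hBsd.2 ⟨hbB, hbQ3, hbQ1⟩, ?_⟩
      exact SB.partner_unique harc hBS hP2 (hpt2S b hbB) hXS hbB
        (fun h => hpt2ne b hbB h.symm) (fun h => hX2 h.symm) (hpt2col b hbB) hbcol
    · intro b hb
      obtain ⟨hbB, hb3, hb1⟩ := hBsd.1 hb
      exact (key2 b hbB hb3 hb1).2.2.2
  have hprod3 : ∏ b ∈ Bf \ {Q1, Q2}, (c b 0 / c b 1) = ∏ X ∈ S', (c X 0 / c X 1) := by
    refine Finset.prod_bij (fun b hb => pt3 b (hBsd.1 hb).1) ?_ ?_ ?_ ?_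
    · intro b hb
      obtain ⟨hbB, hb1, hb2⟩ := hBsd.1 hb
      exact (hS'mem _).2 ⟨hpt3S b hbB, (key3 b hbB hb1 hb2).1.1,
        (key3 b hbB hb1 hb2).1.2, hpt3ne b hbB⟩
    · intro b hb b' hb' heq
      obtain ⟨hbB, _, _⟩ := hBsd.1 hb
      obtain ⟨hbB', _, _⟩ := hBsd.1 hb'
      refine huniq P3 hP3 (pt3 b hbB) (hpt3S b hbB) (fun h => hpt3ne b hbB h.symm)
        b hbB b' hbB' (hpt3col b hbB) ?_
      have heq2 : pt3 b hbB = pt3 b' hbB' := heq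
      rw [heq2]
      exact hpt3col b' hbB'
    · intro X hX
      obtain ⟨hXS, hX1, hX2, hX3⟩ := (hS'mem X).1 hX
      obtain ⟨b, hbB, hbcol⟩ := hB.2 P3 hP3 X hXS (fun h => hX3 h.symm)
      have hbQ1 : b ≠ Q1 := by
        intro h
        exact hX2 (SB.partner_unique harc hBS hP3 hXS hP2 hQ1
          (fun hh => hX3 hh.symm) h23.symm (h ▸ hbcol) (SB.coll3_flip hQ1c))
      have hbQ2 : b ≠ Q2 := by
        intro h
        exact hX1 (SB.partner_unique harc hBS hP3 hXS hP1 hQ2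
          (fun hh => hX3 hh.symm) h13.symm (h ▸ hbcol) (SB.coll3_flip hQ2c))
      refine ⟨b, hBsd.2 ⟨hbB, hbQ1, hbQ2⟩, ?_⟩
      exact SB.partner_unique harc hBS hP3 (hpt3S b hbB) hXS hbB
        (fun h => hpt3ne b hbB h.symm) (fun h => hX3 h.symm) (hpt3col b hbB) hbcol
    · intro b hb
      obtain ⟨hbB, hb1, hb2⟩ := hBsd.1 hb
      exact (key3 b hbB hb1 hb2).2.2.2
  -- split off the special blocking points
  set D : Finset (PGPoint K) := Bf \ {Q1, Q2, Q3} with hD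
  have hDmem : ∀ b, b ∈ D ↔ b ∈ B ∧ b ≠ Q1 ∧ b ≠ Q2 ∧ b ≠ Q3 := by
    intro b
    rw [hD, Finset.mem_sdiff, hBf, Set.Finite.mem_toFinset]
    simp only [Finset.mem_insert, Finset.mem_singleton]
    tauto
  have hQ1D : Q1 ∉ D := fun h => ((hDmem Q1).1 h).2.1 rfl
  have hQ2D : Q2 ∉ D := fun h => ((hDmem Q2).1 h).2.2.1 rfl
  have hQ3D : Q3 ∉ D := fun h => ((hDmem Q3).1 h).2.2.2 rfl
  have hsplit1 : Bf \ {Q2, Q3} = insert Q1 D := by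
    ext a
    rw [hBsd, Finset.mem_insert, hDmem]
    constructor
    · rintro ⟨haB, h2, h3⟩
      by_cases h1 : a = Q1
      · exact Or.inl h1
      · exact Or.inr ⟨haB, h1, h2, h3⟩
    · rintro (rfl | ⟨haB, _, h2, h3⟩)
      · exact ⟨hQ1, hq12, hq13⟩
      · exact ⟨haB, h2, h3⟩
  have hsplit2 : Bf \ {Q3, Q1} = insert Q2 D := by
    ext a
    rw [hBsd, Finset.mem_insert, hDmem]
    constructor
    · rintro ⟨haB, h3, h1⟩
      by_cases h2 : a = Q2
      · exact Or.inl h2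
      · exact Or.inr ⟨haB, h1, h2, h3⟩
    · rintro (rfl | ⟨haB, h1, _, h3⟩)
      · exact ⟨hQ2, hq23, fun h => hq12 h.symm⟩
      · exact ⟨haB, h3, h1⟩
  have hsplit3 : Bf \ {Q1, Q2} = insert Q3 D := by
    ext a
    rw [hBsd, Finset.mem_insert, hDmem]
    constructor
    · rintro ⟨haB, h1, h2⟩
      by_cases h3 : a = Q3
      · exact Or.inl h3
      · exact Or.inr ⟨haB, h1, h2, h3⟩
    · rintro (rfl | ⟨haB, h1, h2, _⟩)
      · exact ⟨hQ3, fun h => hq13 h.symm, fun h => hq23 h.symm⟩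
      · exact ⟨haB, h1, h2⟩
  have hDnz : ∀ b ∈ D, c b 0 ≠ 0 ∧ c b 1 ≠ 0 ∧ c b 2 ≠ 0 := by
    intro b hb
    obtain ⟨hbB, h1, h2, h3⟩ := (hDmem b).1 hb
    exact ⟨(key2 b hbB h3 h1).2.2.1, (key1 b hbB h2 h3).2.1, (key1 b hbB h2 h3).2.2.1⟩
  have hRHS : (∏ X ∈ S', (c X 1 / c X 2)) * ((∏ X ∈ S', (c X 2 / c X 0)) *
      (∏ X ∈ S', (c X 0 / c X 1))) = 1 := by
    rw [← Finset.prod_mul_distrib, ← Finset.prod_mul_distrib]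
    apply Finset.prod_eq_one
    intro X hX
    obtain ⟨hXS, hX1, hX2, hX3⟩ := (hS'mem X).1 hX
    obtain ⟨h0, h1, h2⟩ := hScoord X hXS hX1 hX2 hX3
    field_simp
  have hDone : ∏ b ∈ D, ((c b 1 / c b 2) * ((c b 2 / c b 0) * (c b 0 / c b 1))) = 1 := by
    apply Finset.prod_eq_one
    intro b hb
    obtain ⟨h0, h1, h2⟩ := hDnz b hb
    field_simp
  have hmain : (c Q1 1 / c Q1 2) * ((c Q2 2 / c Q2 0) * (c Q3 0 / c Q3 1)) = 1 := by
    have h1 := hprod1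
    have h2 := hprod2
    have h3 := hprod3
    rw [hsplit1, Finset.prod_insert hQ1D] at h1
    rw [hsplit2, Finset.prod_insert hQ2D] at h2
    rw [hsplit3, Finset.prod_insert hQ3D] at h3
    have hcomb : ((c Q1 1 / c Q1 2) * ∏ b ∈ D, (c b 1 / c b 2)) *
        (((c Q2 2 / c Q2 0) * ∏ b ∈ D, (c b 2 / c b 0)) *
         ((c Q3 0 / c Q3 1) * ∏ b ∈ D, (c b 0 / c b 1))) = 1 := by
      rw [h1, h2, h3]
      exact hRHS
    have hDprod : (∏ b ∈ D, (c b 1 / c b 2)) * ((∏ b ∈ D, (c b 2 / c b 0)) *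
        (∏ b ∈ D, (c b 0 / c b 1))) = 1 := by
      rw [← Finset.prod_mul_distrib, ← Finset.prod_mul_distrib]
      exact hDone
    calc (c Q1 1 / c Q1 2) * ((c Q2 2 / c Q2 0) * (c Q3 0 / c Q3 1))
        = (c Q1 1 / c Q1 2) * ((c Q2 2 / c Q2 0) * (c Q3 0 / c Q3 1)) *
          ((∏ b ∈ D, (c b 1 / c b 2)) * ((∏ b ∈ D, (c b 2 / c b 0)) *
           (∏ b ∈ D, (c b 0 / c b 1)))) := by rw [hDprod, mul_one]
      _ = ((c Q1 1 / c Q1 2) * ∏ b ∈ D, (c b 1 / c b 2)) *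
          (((c Q2 2 / c Q2 0) * ∏ b ∈ D, (c b 2 / c b 0)) *
           ((c Q3 0 / c Q3 1) * ∏ b ∈ D, (c b 0 / c b 1))) := by ring
      _ = 1 := hcomb
  have hrelQ : c Q1 1 * c Q2 2 * c Q3 0 = c Q1 2 * c Q2 0 * c Q3 1 := by
    field_simp at hmain
    linear_combination hmain
  have htwo : (2 : K) = 0 := by
    have h := CharP.cast_eq_zero K 2
    exact_mod_cast h
  rw [hdet, hu0, hw1, hz2]
  linear_combination hrelQ + (c Q1 2 * c Q2 0 * c Q3 1) * htwo
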